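/- Let p(x, z, u, t, e | u′, w) be a family of probability distributions over tuples (x, z, u, t, e) with values in finite sets, indexed by inputs u′ (ranging over the same set as u) and w, satisfying: (A1) Σ_{x,z} p(x, z, u, t, e | u′, w) = p(u, t, e) independently of (u′, w); (A2) p(x, z | u′, w, u, t, e) = p(x, z | u′, w) whenever defined; and no-signaling to Eve: Σ_x p(x, z | u′, w) depends only on (z, w). Define p_w(x, z, u, t, e) := p(x, z, u, t, e | u′ = u, w). Then for every w: p_w(u | z) = p(u) for every z with p_w(z) > 0, and p_w(t | z, u, e) = p(t | u, e) whenever both sides are defined. In particular, if p(u, t, e) satisfies the ε-SV condition, then p_w(u | z) and p_w(t | z, u, e) also satisfy the ε-SV bounds. -/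

import Mathlib

open Classical

noncomputable section

/-- Strings of four bits. -/
abbrev Bits4 := Fin 4 → Bool

/-- Generic (unnormalized) Santha-Vazirani condition: for a weight `μ` on a finite type
`α` whose elements have bits `bits a i` indexed by a finite type `ι` with a strict
order `lt`, every bit is `ε`-unbiased conditioned on all earlier bits. -/
def SVcond (ε : ℝ) {α ι : Type} [Fintype α] [Fintype ι]
    (lt : ι → ι → Prop) (bits : α → ι → Bool) (μ : α → ℝ) : Prop :=
  ∀ (j : ι) (v : ι → Bool) (b : Bool),
    ((1 / 2 - ε) * (∑ a ∈ Finset.univ.filter (fun a => ∀ i, lt i j → bits a i = v i), μ a)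
        ≤ ∑ a ∈ Finset.univ.filter
            (fun a => (∀ i, lt i j → bits a i = v i) ∧ bits a j = b), μ a)
    ∧ (∑ a ∈ Finset.univ.filter
          (fun a => (∀ i, lt i j → bits a i = v i) ∧ bits a j = b), μ a
        ≤ (1 / 2 + ε) * ∑ a ∈ Finset.univ.filter (fun a => ∀ i, lt i j → bits a i = v i), μ a)

/-- Lexicographic order on the bit positions of a setting string in `Fin n → Bits4`. -/
def lexLT4 {n : ℕ} (p q : Fin n × Fin 4) : Prop :=
  p.1 < q.1 ∨ (p.1 = q.1 ∧ p.2 < q.2)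

/-- Bit positions of the joint SV variable `(e, u, t)` (Eve's part first, as in the
paper, then the input bits `u`, then the extra bits `t`). -/
abbrev SVidx (n nt ne : ℕ) : Type := Fin ne ⊕ ((Fin n × Fin 4) ⊕ Fin nt)

/-- Position of a bit of `(e, u, t)` in the SV order. -/
def svPos {n nt ne : ℕ} : SVidx n nt ne → ℕ
  | Sum.inl k => (k : ℕ)
  | Sum.inr (Sum.inl p) => ne + 4 * (p.1 : ℕ) + (p.2 : ℕ)
  | Sum.inr (Sum.inr k) => ne + 4 * n + (k : ℕ)

/-- Order on bit positions of `(e, u, t)`. -/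
def svLT {n nt ne : ℕ} (i j : SVidx n nt ne) : Prop := svPos i < svPos j

/-- The bits of the value `(u, t, e)`. -/
def svBits {n nt ne : ℕ}
    (a : (Fin n → Bits4) × (Fin nt → Bool) × (Fin ne → Bool)) :
    SVidx n nt ne → Bool
  | Sum.inl k => a.2.2 k
  | Sum.inr (Sum.inl p) => a.1 p.1 p.2
  | Sum.inr (Sum.inr k) => a.2.1 k

lemma predU_iff {n nt ne : ℕ} (j : Fin n × Fin 4) (e₀ : Fin ne → Bool)
    (v : Fin n × Fin 4 → Bool)
    (a : (Fin n → Bits4) × (Fin nt → Bool) × (Fin ne → Bool)) :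
    (∀ i, svLT i (Sum.inr (Sum.inl j)) →
        svBits a i = Sum.elim e₀ (Sum.elim v fun _ => false) i)
      ↔ ((∀ pp, lexLT4 pp j → a.1 pp.1 pp.2 = v pp) ∧ a.2.2 = e₀) := by
  have hj1 := j.1.isLt
  have hj2 := j.2.isLt
  constructor
  · intro h
    refine ⟨fun pp hpp => ?_, funext fun k => ?_⟩
    · have h1 := pp.2.isLt
      have : svLT (Sum.inr (Sum.inl pp) : SVidx n nt ne) (Sum.inr (Sum.inl j)) := by
        simp only [svLT, svPos]
        rcases hpp with h' | ⟨h', h''⟩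
        · have := Fin.lt_def.mp h'; omega
        · have := Fin.lt_def.mp h''
          have : (pp.1 : ℕ) = j.1 := congrArg Fin.val h'
          omega
      exact h _ this
    · have hk := k.isLt
      exact h (Sum.inl k) (by simp only [svLT, svPos]; omega)
  · rintro ⟨h1, h2⟩ i hi
    match i with
    | Sum.inl k => simp [svBits, h2]
    | Sum.inr (Sum.inl pp) =>
      have h1' := pp.2.isLt
      simp only [svLT, svPos] at hi
      have : lexLT4 pp j := by
        rcases Nat.lt_trichotomy (pp.1 : ℕ) (j.1 : ℕ) with h' | h' | h'
        · exact Or.inl (Fin.lt_def.mpr h')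
        · exact Or.inr ⟨Fin.ext h', Fin.lt_def.mpr (by omega)⟩
        · omega
      simpa [svBits] using h1 pp this
    | Sum.inr (Sum.inr k) =>
      simp only [svLT, svPos] at hi
      omega

lemma predT_iff {n nt ne : ℕ} (j : Fin nt) (u : Fin n → Bits4)
    (e : Fin ne → Bool) (v : Fin nt → Bool)
    (a : (Fin n → Bits4) × (Fin nt → Bool) × (Fin ne → Bool)) :
    (∀ i, svLT i (Sum.inr (Sum.inr j)) →
        svBits a i = Sum.elim e (Sum.elim (fun pp => u pp.1 pp.2) v) i)
      ↔ (a.1 = u ∧ a.2.2 = e ∧ ∀ k, k < j → a.2.1 k = v k) := by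
  constructor
  · intro h
    refine ⟨funext fun i1 => funext fun i2 => ?_, funext fun k => ?_, fun k hk => ?_⟩
    · have h1 := i1.isLt
      have h2 := i2.isLt
      exact h (Sum.inr (Sum.inl (i1, i2))) (by simp only [svLT, svPos]; omega)
    · have hk := k.isLt
      exact h (Sum.inl k) (by simp only [svLT, svPos]; omega)
    · have := Fin.lt_def.mp hk
      exact h (Sum.inr (Sum.inr k)) (by simp only [svLT, svPos]; omega)
  · rintro ⟨h1, h2, h3⟩ i hi
    match i with
    | Sum.inl k => simp [svBits, h2]
    | Sum.inr (Sum.inl pp) => simp [svBits, h1]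
    | Sum.inr (Sum.inr k) =>
      simp only [svLT, svPos] at hi
      simpa [svBits] using h3 k (Fin.lt_def.mpr (by omega))

lemma svBits_U {n nt ne : ℕ} (a : (Fin n → Bits4) × (Fin nt → Bool) × (Fin ne → Bool))
    (p : Fin n × Fin 4) : svBits a (Sum.inr (Sum.inl p)) = a.1 p.1 p.2 := rfl

lemma svBits_T {n nt ne : ℕ} (a : (Fin n → Bits4) × (Fin nt → Bool) × (Fin ne → Bool))
    (k : Fin nt) : svBits a (Sum.inr (Sum.inr k)) = a.2.1 k := rfl

lemma sum_ite_const {α : Type} [Fintype α] (c : Prop) [Decidable c] (f : α → ℝ) :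
    (∑ a, if c then f a else 0) = if c then ∑ a, f a else 0 := by
  split <;> simp

lemma and_rot (A B C : Prop) : ((A ∧ B) ∧ C) ↔ ((A ∧ C) ∧ B) := by tauto

/-- Scaling preserves the (unnormalized) SV condition. -/
lemma sv_scale {ε : ℝ} {α ι : Type} [Fintype α] [Fintype ι]
    {lt : ι → ι → Prop} {bits : α → ι → Bool} {μ : α → ℝ} {r : ℝ} (hr : 0 ≤ r)
    (h : SVcond ε lt bits μ) : SVcond ε lt bits (fun a => r * μ a) := by
  intro j v b
  obtain ⟨h1, h2⟩ := h j v b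
  rw [← Finset.mul_sum, ← Finset.mul_sum]
  constructor
  · calc (1 / 2 - ε) * (r * ∑ a ∈ Finset.univ.filter
          (fun a => ∀ i, lt i j → bits a i = v i), μ a)
        = r * ((1 / 2 - ε) * ∑ a ∈ Finset.univ.filter
          (fun a => ∀ i, lt i j → bits a i = v i), μ a) := by ring
      _ ≤ r * ∑ a ∈ Finset.univ.filter
          (fun a => (∀ i, lt i j → bits a i = v i) ∧ bits a j = b), μ a :=
        mul_le_mul_of_nonneg_left h1 hr
  · calc r * ∑ a ∈ Finset.univ.filter
          (fun a => (∀ i, lt i j → bits a i = v i) ∧ bits a j = b), μ a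
        ≤ r * ((1 / 2 + ε) * ∑ a ∈ Finset.univ.filter
          (fun a => ∀ i, lt i j → bits a i = v i), μ a) :=
        mul_le_mul_of_nonneg_left h2 hr
      _ = (1 / 2 + ε) * (r * ∑ a ∈ Finset.univ.filter
          (fun a => ∀ i, lt i j → bits a i = v i), μ a) := by ring

/-- The `u`-marginal of an SV source on `(e,u,t)` satisfies the SV bounds. -/
lemma sv_margU {n nt ne : ℕ} {ε : ℝ}
    (M : (Fin n → Bits4) → (Fin nt → Bool) → (Fin ne → Bool) → ℝ)
    (h : SVcond ε svLT svBits
      (fun a : (Fin n → Bits4) × (Fin nt → Bool) × (Fin ne → Bool) =>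
        M a.1 a.2.1 a.2.2)) :
    SVcond ε lexLT4 (fun (u : Fin n → Bits4) (q : Fin n × Fin 4) => u q.1 q.2)
      (fun u => ∑ t, ∑ e, M u t e) := by
  intro j v b
  have hh := fun e₀ : Fin ne → Bool =>
    h (Sum.inr (Sum.inl j)) (Sum.elim e₀ (Sum.elim v fun _ => false)) b
  simp only [Finset.sum_filter, predU_iff, svBits_U, and_rot, ite_and, sum_ite_const,
    Fintype.sum_prod_type, Finset.sum_ite_eq', Finset.mem_univ, if_true] at hh ⊢
  simp only [← ite_and] at hh ⊢
  have step1 : (∑ x : Fin n → Bits4,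
        if ∀ i, lexLT4 i j → x i.1 i.2 = v i then ∑ t, ∑ e, M x t e else 0)
      = ∑ e₀ : Fin ne → Bool, ∑ x : Fin n → Bits4,
          if ∀ i, lexLT4 i j → x i.1 i.2 = v i then ∑ t, M x t e₀ else 0 := by
    calc (∑ x : Fin n → Bits4,
          if ∀ i, lexLT4 i j → x i.1 i.2 = v i then ∑ t, ∑ e, M x t e else 0)
        = ∑ x : Fin n → Bits4, ∑ e₀ : Fin ne → Bool,
            if ∀ i, lexLT4 i j → x i.1 i.2 = v i then ∑ t, M x t e₀ else 0 := by
          refine Finset.sum_congr rfl fun x _ => ?_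
          beta_reduce
          rw [sum_ite_const]
          exact if_congr Iff.rfl Finset.sum_comm rfl
      _ = _ := Finset.sum_comm
  have step2 : (∑ x : Fin n → Bits4,
        if (∀ i, lexLT4 i j → x i.1 i.2 = v i) ∧ x j.1 j.2 = b then
          ∑ t, ∑ e, M x t e else 0)
      = ∑ e₀ : Fin ne → Bool, ∑ x : Fin n → Bits4,
          if (∀ i, lexLT4 i j → x i.1 i.2 = v i) ∧ x j.1 j.2 = b then
            ∑ t, M x t e₀ else 0 := by
    calc (∑ x : Fin n → Bits4,
          if (∀ i, lexLT4 i j → x i.1 i.2 = v i) ∧ x j.1 j.2 = b then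
            ∑ t, ∑ e, M x t e else 0)
        = ∑ x : Fin n → Bits4, ∑ e₀ : Fin ne → Bool,
            if (∀ i, lexLT4 i j → x i.1 i.2 = v i) ∧ x j.1 j.2 = b then
              ∑ t, M x t e₀ else 0 := by
          refine Finset.sum_congr rfl fun x _ => ?_
          beta_reduce
          rw [sum_ite_const]
          exact if_congr Iff.rfl Finset.sum_comm rfl
      _ = _ := Finset.sum_comm
  rw [step1, step2, Finset.mul_sum, Finset.mul_sum]
  exact ⟨Finset.sum_le_sum fun e₀ _ => (hh e₀).1,
    Finset.sum_le_sum fun e₀ _ => (hh e₀).2⟩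

/-- The `t`-conditional of an SV source on `(e,u,t)` satisfies the SV bounds. -/
lemma sv_margT {n nt ne : ℕ} {ε : ℝ}
    (M : (Fin n → Bits4) → (Fin nt → Bool) → (Fin ne → Bool) → ℝ)
    (u : Fin n → Bits4) (e : Fin ne → Bool)
    (h : SVcond ε svLT svBits
      (fun a : (Fin n → Bits4) × (Fin nt → Bool) × (Fin ne → Bool) =>
        M a.1 a.2.1 a.2.2)) :
    SVcond ε (fun (i j : Fin nt) => i < j) (fun (t : Fin nt → Bool) (k : Fin nt) => t k)
      (fun t => M u t e) := by
  intro j v b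
  have hh := h (Sum.inr (Sum.inr j)) (Sum.elim e (Sum.elim (fun pp => u pp.1 pp.2) v)) b
  simp only [Finset.sum_filter, predT_iff, svBits_T, ite_and, sum_ite_const,
    Fintype.sum_prod_type, Finset.sum_ite_eq', Finset.mem_univ, if_true] at hh ⊢
  convert hh using 9

/-- for a family `p(x,z,u,t,e|u',w)` satisfying A1, A2 and no-signaling
to Eve, setting `p_w := p(·|u' = u, w)`, one has `p_w(u|z) = p(u)` and
`p_w(t|z,u,e) = p(t|u,e)` whenever defined; in particular if `p(u,t,e)` is an ε-SV
source, then `p_w(u|z)` and `p_w(t|z,u,e)` satisfy the ε-SV bounds. -/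
theorem stmt_15 {X Z W : Type} [Fintype X] [Fintype Z] [Fintype W]
    (n nt ne : ℕ) (ε : ℝ) (hε0 : 0 ≤ ε) (hε : ε < 1 / 2)
    (p : (Fin n → Bits4) → W → X → Z → (Fin n → Bits4) → (Fin nt → Bool) →
          (Fin ne → Bool) → ℝ)
    (hp0 : ∀ u' w x z u t e, 0 ≤ p u' w x z u t e)
    (hp1 : ∀ u' w, ∑ x, ∑ z, ∑ u, ∑ t, ∑ e, p u' w x z u t e = 1)
    -- A1: the distribution of (u,t,e) is independent of the inputs (u',w)
    (hA1 : ∀ u'₁ w₁ u'₂ w₂ u t e,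
      (∑ x, ∑ z, p u'₁ w₁ x z u t e) = (∑ x, ∑ z, p u'₂ w₂ x z u t e))
    -- A2: p(x,z | u',w,u,t,e) = p(x,z | u',w) whenever defined
    (hA2 : ∀ u' w x z u t e,
      0 < (∑ x', ∑ z', p u' w x' z' u t e) →
      p u' w x z u t e / (∑ x', ∑ z', p u' w x' z' u t e)
        = ∑ u₂, ∑ t₂, ∑ e₂, p u' w x z u₂ t₂ e₂)
    -- no-signaling to Eve: Σ_x p(x,z|u',w) depends only on (z,w)
    (hNSE : ∀ u'₁ u'₂ w z,
      (∑ x, ∑ u, ∑ t, ∑ e, p u'₁ w x z u t e) = (∑ x, ∑ u, ∑ t, ∑ e, p u'₂ w x z u t e))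
    -- reference input fixing the marginal `p(u,t,e)` (by A1 the choice is irrelevant)
    (c₀ : Fin n → Bits4) (w₀ : W) :
    -- (a) p_w(u|z) = p(u)
    (∀ w z, 0 < (∑ x, ∑ u', ∑ t, ∑ e, p u' w x z u' t e) →
      ∀ u, (∑ x, ∑ t, ∑ e, p u w x z u t e) / (∑ x, ∑ u', ∑ t, ∑ e, p u' w x z u' t e)
          = ∑ x, ∑ z', ∑ t, ∑ e, p c₀ w₀ x z' u t e)
    -- (b) p_w(t|z,u,e) = p(t|u,e)
    ∧ (∀ w z u e t,
        0 < (∑ x, ∑ t', p u w x z u t' e) →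
        0 < (∑ x, ∑ z', ∑ t', p c₀ w₀ x z' u t' e) →
        (∑ x, p u w x z u t e) / (∑ x, ∑ t', p u w x z u t' e)
          = (∑ x, ∑ z', p c₀ w₀ x z' u t e) / (∑ x, ∑ z', ∑ t', p c₀ w₀ x z' u t' e))
    -- (c) in particular: the SV condition is inherited
    ∧ (SVcond ε svLT svBits
          (fun a : (Fin n → Bits4) × (Fin nt → Bool) × (Fin ne → Bool) =>
            ∑ x, ∑ z, p c₀ w₀ x z a.1 a.2.1 a.2.2) →
        (∀ w z, SVcond ε lexLT4 (fun (u : Fin n → Bits4) (q : Fin n × Fin 4) => u q.1 q.2)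
            (fun u => ∑ x, ∑ t, ∑ e, p u w x z u t e))
        ∧ (∀ w z u e, SVcond ε (fun (i j : Fin nt) => i < j)
            (fun (t : Fin nt → Bool) (k : Fin nt) => t k)
            (fun t => ∑ x, p u w x z u t e))) := by
  set M : (Fin n → Bits4) → (Fin nt → Bool) → (Fin ne → Bool) → ℝ :=
    fun u t e => ∑ x, ∑ z, p c₀ w₀ x z u t e with hMdef
  set q : (Fin n → Bits4) → W → X → Z → ℝ :=
    fun u' w x z => ∑ u₂, ∑ t₂, ∑ e₂, p u' w x z u₂ t₂ e₂ with hqdef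
  have hM0 : ∀ u t e, 0 ≤ M u t e := fun u t e =>
    Finset.sum_nonneg fun x _ => Finset.sum_nonneg fun z _ => hp0 _ _ _ _ _ _ _
  have hq0 : ∀ u' w x z, 0 ≤ q u' w x z := fun u' w x z =>
    Finset.sum_nonneg fun _ _ => Finset.sum_nonneg fun _ _ =>
      Finset.sum_nonneg fun _ _ => hp0 _ _ _ _ _ _ _
  have hfact : ∀ u' w x z u t e, p u' w x z u t e = q u' w x z * M u t e := by
    intro u' w x z u t e
    have hA : (∑ x', ∑ z', p u' w x' z' u t e) = M u t e := hA1 u' w c₀ w₀ u t e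
    rcases lt_or_eq_of_le (Finset.sum_nonneg fun x _ => Finset.sum_nonneg fun z _ =>
        hp0 u' w x z u t e : (0:ℝ) ≤ ∑ x', ∑ z', p u' w x' z' u t e) with hpos | hzero
    · have h := hA2 u' w x z u t e hpos
      rw [div_eq_iff (ne_of_gt hpos)] at h
      rw [h, hA, mul_comm]
    · have hM' : M u t e = 0 := hA ▸ hzero.symm
      have h1 : p u' w x z u t e ≤ ∑ z', p u' w x z' u t e :=
        Finset.single_le_sum (fun z' _ => hp0 u' w x z' u t e) (Finset.mem_univ z)
      have h2 : (∑ z', p u' w x z' u t e) ≤ ∑ x', ∑ z', p u' w x' z' u t e :=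
        Finset.single_le_sum (fun x' _ => Finset.sum_nonneg fun z' _ => hp0 u' w x' z' u t e)
          (Finset.mem_univ x)
      have : p u' w x z u t e = 0 :=
        le_antisymm (h1.trans (h2.trans hzero.symm.le)) (hp0 u' w x z u t e)
      rw [this, hM', mul_zero]
  have hq_sum : ∀ u' w, ∑ x, ∑ z, q u' w x z = 1 := fun u' w => hp1 u' w
  have hNS : ∀ u' w z, ∑ x, q u' w x z = ∑ x, q c₀ w x z := fun u' w z => hNSE u' c₀ w z
  set r : W → Z → ℝ := fun w z => ∑ x, q c₀ w x z with hrdef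
  have hr0 : ∀ w z, 0 ≤ r w z := fun w z => Finset.sum_nonneg fun x _ => hq0 c₀ w x z
  have hM_sum : ∑ u, ∑ t, ∑ e, M u t e = 1 := by
    have h := hp1 c₀ w₀
    calc ∑ u, ∑ t, ∑ e, M u t e
        = ∑ a : (Fin n → Bits4) × (Fin nt → Bool) × (Fin ne → Bool),
            ∑ b : X × Z, p c₀ w₀ b.1 b.2 a.1 a.2.1 a.2.2 := by
          simp [Fintype.sum_prod_type, hMdef]
      _ = ∑ b : X × Z, ∑ a : (Fin n → Bits4) × (Fin nt → Bool) × (Fin ne → Bool),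
            p c₀ w₀ b.1 b.2 a.1 a.2.1 a.2.2 := Finset.sum_comm
      _ = 1 := by simpa [Fintype.sum_prod_type] using h
  set MU : (Fin n → Bits4) → ℝ := fun u => ∑ t, ∑ e, M u t e with hMUdef
  have hMU0 : ∀ u, 0 ≤ MU u := fun u =>
    Finset.sum_nonneg fun t _ => Finset.sum_nonneg fun e _ => hM0 u t e
  have hMU_sum : ∑ u, MU u = 1 := hM_sum
  have key_a_num : ∀ w z u, (∑ x, ∑ t, ∑ e, p u w x z u t e) = r w z * MU u := by
    intro w z u
    simp only [hfact, ← Finset.mul_sum]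
    rw [← Finset.sum_mul, hNS u w z]
  have key_a_den : ∀ w z, (∑ x, ∑ u', ∑ t, ∑ e, p u' w x z u' t e) = r w z := by
    intro w z
    have h1 : ∀ x, (∑ u', ∑ t, ∑ e, p u' w x z u' t e) = ∑ u', q u' w x z * MU u' := by
      intro x
      refine Finset.sum_congr rfl fun u' _ => ?_
      simp only [hfact, ← Finset.mul_sum]
      rfl
    rw [Finset.sum_congr rfl fun x _ => h1 x, Finset.sum_comm]
    have h2 : ∀ u', (∑ x, q u' w x z * MU u') = r w z * MU u' := by
      intro u'
      rw [← Finset.sum_mul, hNS u' w z]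
    rw [Finset.sum_congr rfl fun u' _ => h2 u', ← Finset.mul_sum, hMU_sum, mul_one]
  have key_rhs_a : ∀ u, (∑ x, ∑ z', ∑ t, ∑ e, p c₀ w₀ x z' u t e) = MU u := by
    intro u
    have h1 : ∀ x z', (∑ t, ∑ e, p c₀ w₀ x z' u t e) = q c₀ w₀ x z' * MU u := by
      intro x z'
      simp only [hfact, ← Finset.mul_sum]
      rfl
    simp only [h1, ← Finset.sum_mul]
    rw [show (∑ x, ∑ z', q c₀ w₀ x z') = 1 from hq_sum c₀ w₀, one_mul]
  have key_b1 : ∀ w z u t e, (∑ x, p u w x z u t e) = r w z * M u t e := by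
    intro w z u t e
    simp only [hfact]
    rw [← Finset.sum_mul, hNS u w z]
  have key_b2 : ∀ w z u e, (∑ x, ∑ t', p u w x z u t' e) = r w z * ∑ t', M u t' e := by
    intro w z u e
    rw [Finset.sum_comm, Finset.mul_sum]
    exact Finset.sum_congr rfl fun t' _ => key_b1 w z u t' e
  have key_b3 : ∀ u t e, (∑ x, ∑ z', p c₀ w₀ x z' u t e) = M u t e := by
    intro u t e
    simp only [hfact, ← Finset.sum_mul]
    rw [show (∑ x, ∑ z', q c₀ w₀ x z') = 1 from hq_sum c₀ w₀, one_mul]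
  have key_b4 : ∀ u e, (∑ x, ∑ z', ∑ t', p c₀ w₀ x z' u t' e) = ∑ t', M u t' e := by
    intro u e
    have h1 : ∀ x z', (∑ t', p c₀ w₀ x z' u t' e) = q c₀ w₀ x z' * ∑ t', M u t' e := by
      intro x z'
      simp only [hfact, ← Finset.mul_sum]
    simp only [h1, ← Finset.sum_mul]
    rw [show (∑ x, ∑ z', q c₀ w₀ x z') = 1 from hq_sum c₀ w₀, one_mul]
  refine ⟨?_, ?_, ?_⟩
  · -- (a)
    intro w z hpos u
    rw [key_a_den] at hpos
    rw [key_a_num, key_a_den, key_rhs_a, mul_comm, mul_div_assoc,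
      div_self (ne_of_gt hpos), mul_one]
  · -- (b)
    intro w z u e t h1 h2
    rw [key_b2] at h1
    have hrpos : 0 < r w z := by
      rcases (hr0 w z).lt_or_eq with h | h
      · exact h
      · rw [← h, zero_mul] at h1; exact absurd h1 (lt_irrefl 0)
    rw [key_b1, key_b2, key_b3, key_b4]
    exact mul_div_mul_left _ _ (ne_of_gt hrpos)
  · -- (c)
    intro hSV
    have hSV' : SVcond ε svLT svBits
        (fun a : (Fin n → Bits4) × (Fin nt → Bool) × (Fin ne → Bool) =>
          M a.1 a.2.1 a.2.2) := hSV
    constructor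
    · intro w z
      have h1 : (fun u => ∑ x, ∑ t, ∑ e, p u w x z u t e)
          = fun u => r w z * ∑ t, ∑ e, M u t e := funext fun u => key_a_num w z u
      rw [h1]
      exact sv_scale (hr0 w z) (sv_margU M hSV')
    · intro w z u e
      have h1 : (fun t => ∑ x, p u w x z u t e)
          = fun t => r w z * M u t e := funext fun t => key_b1 w z u t e
      rw [h1]
      exact sv_scale (hr0 w z) (sv_margT M u e hSV')

end
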